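/- Let f : S -> R be differentiable and satisfy the quadratic upper bound f(Y) <= f(X) + <grad f(X), Y - X> + (L0 + L1 ||grad f(X)||_*) / 2 * ||X - Y||^2 for all X, Y, with L0, L1 >= 0. Let X^{k+1} be a minimizer of Z -> <G, Z> over the ball B(X^k, t) = {Z : ||Z - X^k|| <= t}, where t > 0 and G is arbitrary. Then f(X^{k+1}) <= f(X^k) + 2 t ||grad f(X^k) - G||_* - t ||grad f(X^k)||_* + (L0 + L1 ||grad f(X^k)||_*) / 2 * t^2. -/

import Mathlib

open scoped RealInnerProductSpace

/-- Type synonym used to endow `S` with the norm `N`. -/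
def NormSyn (S : Type*) : Type _ := S

theorem aux_norm_bound {S : Type*} [NormedAddCommGroup S] [InnerProductSpace ℝ S]
    [FiniteDimensional ℝ S]
    (N : S → ℝ)
    (hN_add : ∀ x y, N (x + y) ≤ N x + N y)
    (hN_smul : ∀ (c : ℝ) x, N (c • x) = |c| * N x)
    (hN_zero : ∀ x, N x = 0 ↔ x = 0) :
    ∃ C : ℝ, 0 ≤ C ∧ ∀ Z : S, ‖Z‖ ≤ C * N Z := by
  letI : AddCommGroup (NormSyn S) := inferInstanceAs (AddCommGroup S)
  letI : Module ℝ (NormSyn S) := inferInstanceAs (Module ℝ S)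
  letI : NormedAddCommGroup (NormSyn S) := AddGroupNorm.toNormedAddCommGroup
    { toFun := fun x => N x
      map_zero' := (hN_zero 0).mpr rfl
      add_le' := hN_add
      neg' := fun x => by
        have : (-x : S) = (-1 : ℝ) • x := by simp
        show N (-x) = N x
        rw [this]; exact (hN_smul (-1) x).trans (by simp)
      eq_zero_of_map_eq_zero' := fun x h => (hN_zero x).mp h }
  letI : NormedSpace ℝ (NormSyn S) := by
    refine ⟨fun c x => ?_⟩
    show N (c • x) ≤ |c| * N x
    exact le_of_eq (hN_smul c x)
  letI : FiniteDimensional ℝ (NormSyn S) := inferInstanceAs (FiniteDimensional ℝ S)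
  let e : NormSyn S →ₗ[ℝ] S := LinearMap.id (R := ℝ) (M := S)
  have hc : Continuous e := e.continuous_of_finiteDimensional
  obtain ⟨C, hCpos, hC⟩ := SemilinearMapClass.bound_of_continuous e hc
  exact ⟨C, le_of_lt hCpos, fun Z => hC Z⟩

theorem stmt_15 {S : Type*} [NormedAddCommGroup S] [InnerProductSpace ℝ S]
    [FiniteDimensional ℝ S] [CompleteSpace S]
    (N : S → ℝ)
    (hN_add : ∀ x y, N (x + y) ≤ N x + N y)
    (hN_smul : ∀ (c : ℝ) x, N (c • x) = |c| * N x)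
    (hN_zero : ∀ x, N x = 0 ↔ x = 0)
    (Nd : S → ℝ)
    (hNd : ∀ X, Nd X = sSup ((fun Z => ⟪X, Z⟫) '' {Z | N Z ≤ 1}))
    (f : S → ℝ) (hf : Differentiable ℝ f)
    (L0 L1 : ℝ) (hL0 : 0 ≤ L0) (hL1 : 0 ≤ L1)
    (hquad : ∀ X Y, f Y ≤ f X + ⟪gradient f X, Y - X⟫ +
      (L0 + L1 * Nd (gradient f X)) / 2 * (N (X - Y)) ^ 2)
    (G X0 X1 : S) (t : ℝ) (ht : 0 < t)
    (hball : N (X1 - X0) ≤ t)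
    (hmin : ∀ Z, N (Z - X0) ≤ t → ⟪G, X1⟫ ≤ ⟪G, Z⟫) :
    f X1 ≤ f X0 + 2 * t * Nd (gradient f X0 - G) - t * Nd (gradient f X0) +
      (L0 + L1 * Nd (gradient f X0)) / 2 * t ^ 2 := by
  obtain ⟨C, hC0, hC⟩ := aux_norm_bound N hN_add hN_smul hN_zero
  have hN0 : N 0 = 0 := (hN_zero 0).mpr rfl
  have hNneg : ∀ x : S, N (-x) = N x := by
    intro x
    have : (-x : S) = (-1 : ℝ) • x := by simp
    rw [this, hN_smul]; simp
  have hNnn : ∀ x : S, 0 ≤ N x := by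
    intro x
    have h1 := hN_add x (-x)
    rw [add_neg_cancel, hN0, hNneg] at h1
    linarith
  -- the set defining Nd
  have hmem0 : ∀ X : S, (0 : ℝ) ∈ ((fun Z => ⟪X, Z⟫) '' {Z | N Z ≤ 1}) := by
    intro X
    exact ⟨0, by simp [hN0], by simp⟩
  have hne : ∀ X : S, ((fun Z => ⟪X, Z⟫) '' {Z | N Z ≤ 1}).Nonempty :=
    fun X => ⟨0, hmem0 X⟩
  have hbdd : ∀ X : S, BddAbove ((fun Z => ⟪X, Z⟫) '' {Z | N Z ≤ 1}) := by
    intro X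
    refine ⟨‖X‖ * C, ?_⟩
    rintro y ⟨Z, hZ, rfl⟩
    calc ⟪X, Z⟫ ≤ ‖X‖ * ‖Z‖ := real_inner_le_norm X Z
      _ ≤ ‖X‖ * (C * N Z) := by
          exact mul_le_mul_of_nonneg_left (hC Z) (norm_nonneg X)
      _ ≤ ‖X‖ * (C * 1) := by
          have : C * N Z ≤ C * 1 := mul_le_mul_of_nonneg_left hZ hC0
          exact mul_le_mul_of_nonneg_left this (norm_nonneg X)
      _ = ‖X‖ * C := by ring
  have hle : ∀ X Z : S, N Z ≤ 1 → ⟪X, Z⟫ ≤ Nd X := by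
    intro X Z hZ
    rw [hNd]
    exact le_csSup (hbdd X) ⟨Z, hZ, rfl⟩
  have hNd0 : ∀ X : S, 0 ≤ Nd X := by
    intro X
    have := hle X 0 (by simp [hN0])
    simpa using this
  -- generalized Cauchy–Schwarz
  have hCS : ∀ X Z : S, ⟪X, Z⟫ ≤ Nd X * N Z := by
    intro X Z
    rcases eq_or_lt_of_le (hNnn Z) with h | h
    · have hZ0 : Z = 0 := (hN_zero Z).mp h.symm
      simp [hZ0, hN0]
    · have h1 : N ((N Z)⁻¹ • Z) ≤ 1 := by
        rw [hN_smul, abs_of_pos (by positivity)]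
        rw [inv_mul_cancel₀ (ne_of_gt h)]
      have h2 := hle X _ h1
      rw [real_inner_smul_right] at h2
      have h3 := mul_le_mul_of_nonneg_left h2 (le_of_lt h)
      rw [← mul_assoc, mul_inv_cancel₀ (ne_of_gt h), one_mul] at h3
      linarith [h3]
  -- triangle inequality for Nd
  have hNdtri : ∀ A B : S, Nd (A + B) ≤ Nd A + Nd B := by
    intro A B
    rw [hNd]
    apply csSup_le (hne _)
    rintro y ⟨Z, hZ, rfl⟩
    have h1 := hle A Z hZ
    have h2 := hle B Z hZ
    simp only [inner_add_left]
    linarith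
  set g := gradient f X0 with hg
  -- key inequality from minimality
  have hkey : ⟪G, X1 - X0⟫ ≤ -t * Nd G := by
    have h1 : Nd G ≤ (⟪G, X0⟫ - ⟪G, X1⟫) / t := by
      rw [hNd]
      apply csSup_le (hne _)
      rintro y ⟨Z, hZ, rfl⟩
      have hW : N ((X0 - t • Z) - X0) ≤ t := by
        have : (X0 - t • Z) - X0 = (-t) • Z := by
          simp [neg_smul]
        rw [this, hN_smul, abs_neg, abs_of_pos ht]
        calc t * N Z ≤ t * 1 := mul_le_mul_of_nonneg_left hZ (le_of_lt ht)
          _ = t := mul_one t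
      have h2 := hmin _ hW
      rw [inner_sub_right, real_inner_smul_right] at h2
      rw [le_div_iff₀ ht]
      linarith
    have h2 := mul_le_mul_of_nonneg_left h1 (le_of_lt ht)
    rw [mul_div_cancel₀ _ (ne_of_gt ht)] at h2
    rw [inner_sub_right]
    linarith
  have hq := hquad X0 X1
  -- bound the inner product term
  have hsplit : ⟪g, X1 - X0⟫ = ⟪g - G, X1 - X0⟫ + ⟪G, X1 - X0⟫ := by
    rw [← inner_add_left]; simp
  have hA : ⟪g - G, X1 - X0⟫ ≤ Nd (g - G) * t := by
    calc ⟪g - G, X1 - X0⟫ ≤ Nd (g - G) * N (X1 - X0) := hCS _ _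
      _ ≤ Nd (g - G) * t := mul_le_mul_of_nonneg_left hball (hNd0 _)
  have htriag : Nd g ≤ Nd (g - G) + Nd G := by
    have := hNdtri (g - G) G
    rwa [sub_add_cancel] at this
  have hNsym : N (X0 - X1) = N (X1 - X0) := by
    rw [← hNneg (X1 - X0)]; congr 1; abel
  have hsq : (N (X0 - X1)) ^ 2 ≤ t ^ 2 := by
    rw [hNsym]
    exact pow_le_pow_left₀ (hNnn _) hball 2
  have hcoef : 0 ≤ (L0 + L1 * Nd g) / 2 := by
    have := hNd0 g
    positivity
  nlinarith [mul_le_mul_of_nonneg_left hsq hcoef, mul_le_mul_of_nonneg_left htriag (le_of_lt ht), hNd0 (g - G), hNd0 G]
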